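/- (Proposition 3, part 3) Assume r > m and β ≤ cIS, and set S1 = (r − m)/cSS. Then every solution of the reduced system with S(0) ≥ 0, I(0) ≥ 0 and (S(0), I(0)) ≠ (0, 0) converges to the disease-free equilibrium (S1, 0) as t → ∞; moreover the reduced system has no equilibrium with S > 0 and I > 0. -/

import Mathlib

open Filter Topology

/-- `(S, I)` is a solution of the reduced system on `[0, ∞)`. -/
def IsSol (r m β γ μ cSS cSI cIS cII a : ℝ) (S I : ℝ → ℝ) : Prop :=
  ∀ t : ℝ, 0 ≤ t →
    HasDerivAt S (r * S t + a * r * I t - m * S t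
      - (cSS * S t + cSI * I t) * S t - β * S t * I t + γ * I t) t ∧
    HasDerivAt I (-(m * I t) - (cIS * S t + cII * I t) * I t
      + β * S t * I t - γ * I t - μ * I t) t

/-- `(s, i)` is an equilibrium point of the reduced system. -/
def IsEquilibrium (r m β γ μ cSS cSI cIS cII a : ℝ) (s i : ℝ) : Prop :=
  r * s + a * r * i - m * s - (cSS * s + cSI * i) * s - β * s * i + γ * i = 0 ∧
  -(m * i) - (cIS * s + cII * i) * i + β * s * i - γ * i - μ * i = 0

/-- All parameters are positive and `a ∈ (0, 1)`. -/
def ParamsPos (r m β γ μ cSS cSI cIS cII a : ℝ) : Prop :=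
  0 < r ∧ 0 < m ∧ 0 < β ∧ 0 < γ ∧ 0 < μ ∧
    0 < cSS ∧ 0 < cSI ∧ 0 < cIS ∧ 0 < cII ∧ 0 < a ∧ a < 1

set_option maxHeartbeats 1000000

namespace Prop3Aux

open Filter Topology Set Real



lemma monoIci {f f' : ℝ → ℝ} {a : ℝ} (hc : ContinuousOn f (Ici a))
    (hd : ∀ t, a < t → HasDerivAt f (f' t) t) (h0 : ∀ t, a < t → 0 ≤ f' t) :
    MonotoneOn f (Ici a) := by
  apply monotoneOn_of_hasDerivWithinAt_nonneg (convex_Ici a) hc (f' := f')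
  · intro x hx; rw [interior_Ici] at hx
    exact (hd x hx).hasDerivWithinAt
  · intro x hx; rw [interior_Ici] at hx; exact h0 x hx

lemma antiIci {f f' : ℝ → ℝ} {a : ℝ} (hc : ContinuousOn f (Ici a))
    (hd : ∀ t, a < t → HasDerivAt f (f' t) t) (h0 : ∀ t, a < t → f' t ≤ 0) :
    AntitoneOn f (Ici a) := by
  have := monoIci (f := fun t => -f t) (f' := fun t => -f' t)
    (hc.neg) (fun t ht => (hd t ht).neg) (fun t ht => neg_nonneg.2 (h0 t ht))
  intro x hx y hy hxy
  have := this hx hy hxy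
  simpa using this

lemma strictMonoIci {f f' : ℝ → ℝ} {a : ℝ} (hc : ContinuousOn f (Ici a))
    (hd : ∀ t, a < t → HasDerivAt f (f' t) t) (h0 : ∀ t, a < t → 0 < f' t) :
    StrictMonoOn f (Ici a) := by
  apply strictMonoOn_of_hasDerivWithinAt_pos (convex_Ici a) hc (f' := f')
  · intro x hx; rw [interior_Ici] at hx
    exact (hd x hx).hasDerivWithinAt
  · intro x hx; rw [interior_Ici] at hx; exact h0 x hx

lemma constIci {f f' : ℝ → ℝ} {a : ℝ} (hc : ContinuousOn f (Ici a))
    (hd : ∀ t, a < t → HasDerivAt f (f' t) t) (h0 : ∀ t, a < t → f' t = 0) :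
    ∀ t, a ≤ t → f t = f a := by
  have hm := monoIci hc hd (fun t ht => (h0 t ht).ge)
  have ha := antiIci hc hd (fun t ht => (h0 t ht).le)
  intro t ht
  exact le_antisymm (ha self_mem_Ici ht ht) (hm self_mem_Ici ht ht)

lemma stay_le {f f' : ℝ → ℝ} {a B : ℝ}
    (hc : ContinuousOn f (Ici a))
    (hd : ∀ t, a < t → HasDerivAt f (f' t) t)
    (hneg : ∀ t, a < t → B < f t → f' t < 0)
    (h0 : f a ≤ B) : ∀ t, a ≤ t → f t ≤ B := by
  intro b hb
  by_contra hbB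
  push_neg at hbB
  have hab : a < b := by
    rcases eq_or_lt_of_le hb with h | h
    · exact absurd (h ▸ h0) (not_le.2 hbB)
    · exact h
  set A := Icc a b ∩ f ⁻¹' (Iic B) with hA
  have hAne : A.Nonempty := ⟨a, ⟨le_refl a, hab.le⟩, h0⟩
  have hAbdd : BddAbove A := ⟨b, fun t ht => ht.1.2⟩
  have hAclosed : IsClosed A :=
    (hc.mono (Icc_subset_Ici_self)).preimage_isClosed_of_isClosed isClosed_Icc isClosed_Iic
  have ht1A : sSup A ∈ A := hAclosed.csSup_mem hAne hAbdd
  set t1 := sSup A with ht1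
  have hfT1 : f t1 ≤ B := ht1A.2
  have ht1b : t1 < b := lt_of_le_of_ne ht1A.1.2 (fun h => absurd (h ▸ hfT1) (not_le.2 hbB))
  have hat1 : a ≤ t1 := ht1A.1.1
  have hgt : ∀ t, t1 < t → t ≤ b → B < f t := by
    intro t h1 h2
    by_contra hle; push_neg at hle
    have : t ∈ A := ⟨⟨le_trans hat1 h1.le, h2⟩, hle⟩
    exact absurd (le_csSup hAbdd this) (not_le.2 h1)
  have hanti : StrictAntiOn f (Icc t1 b) := by
    apply strictAntiOn_of_hasDerivWithinAt_neg (convex_Icc _ _)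
      (hc.mono (fun x hx => le_trans hat1 hx.1)) (f' := f')
    · intro x hx; rw [interior_Icc] at hx
      exact (hd x (lt_of_le_of_lt hat1 hx.1)).hasDerivWithinAt
    · intro x hx; rw [interior_Icc] at hx
      exact hneg x (lt_of_le_of_lt hat1 hx.1) (hgt x hx.1 hx.2.le)
  have := hanti (left_mem_Icc.2 ht1b.le) (right_mem_Icc.2 ht1b.le) ht1b
  exact absurd (lt_of_lt_of_le this hfT1) (not_lt.2 hbB.le)

lemma stay_ge {f f' : ℝ → ℝ} {a δ : ℝ}
    (hc : ContinuousOn f (Ici a))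
    (hd : ∀ t, a < t → HasDerivAt f (f' t) t)
    (hpos : ∀ t, a < t → f t < δ → 0 < f' t)
    (h0 : δ ≤ f a) : ∀ t, a ≤ t → δ ≤ f t := by
  have := stay_le (f := fun t => -f t) (f' := fun t => -f' t) (B := -δ)
    hc.neg (fun t ht => (hd t ht).neg)
    (fun t ht hB => by
      have hB' : f t < δ := by simpa using (neg_lt_neg_iff.1 (by simpa using hB))
      simpa using neg_neg_iff_pos.2 (hpos t ht hB'))
    (by simpa using h0)
  intro t ht
  have h2 := this t ht
  simpa using neg_le_neg_iff.1 (by simpa using h2)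


lemma main_conv (r m β γ μ cSS cSI cIS cII a : ℝ)
    (hp : ParamsPos r m β γ μ cSS cSI cIS cII a)
    (hrm : m < r) (hβc : β ≤ cIS)
    (S I : ℝ → ℝ) (hsol : IsSol r m β γ μ cSS cSI cIS cII a S I)
    (hS0 : 0 ≤ S 0) (hI0 : 0 ≤ I 0)
    (hne : (S 0, I 0) ≠ ((0:ℝ), (0:ℝ))) :
    Tendsto (fun t => (S t, I t)) atTop (𝓝 (((r - m) / cSS, 0) : ℝ × ℝ)) := by
  obtain ⟨hr, hm, hβ, hγ, hμ, hcSS, hcSI, hcIS, hcII, ha0, ha1⟩ := hp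
  set SD : ℝ → ℝ := fun t => r * S t + a * r * I t - m * S t
      - (cSS * S t + cSI * I t) * S t - β * S t * I t + γ * I t with hSD
  set ID : ℝ → ℝ := fun t => -(m * I t) - (cIS * S t + cII * I t) * I t
      + β * S t * I t - γ * I t - μ * I t with hID
  have hS : ∀ t, 0 ≤ t → HasDerivAt S (SD t) t := fun t ht => (hsol t ht).1
  have hI : ∀ t, 0 ≤ t → HasDerivAt I (ID t) t := fun t ht => (hsol t ht).2
  have hScont : ContinuousOn S (Ici 0) :=
    fun t ht => ((hS t ht).continuousAt).continuousWithinAt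
  have hIcont : ContinuousOn I (Ici 0) :=
    fun t ht => ((hI t ht).continuousAt).continuousWithinAt
  -- truncated versions, continuous on all of ℝ
  set Sc : ℝ → ℝ := fun t => S (max t 0) with hScdef
  set Ic : ℝ → ℝ := fun t => I (max t 0) with hIcdef
  have hmaxc : Continuous fun t : ℝ => max t 0 := continuous_id.max continuous_const
  have hmax_mem : ∀ t : ℝ, max t 0 ∈ Ici (0:ℝ) := fun t => le_max_right t 0
  have hScc : Continuous Sc := hScont.comp_continuous hmaxc hmax_mem
  have hIcc : Continuous Ic := hIcont.comp_continuous hmaxc hmax_mem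
  have hSceq : ∀ t, 0 ≤ t → Sc t = S t := fun t ht => by
    simp only [hScdef]; rw [max_eq_left ht]
  have hIceq : ∀ t, 0 ≤ t → Ic t = I t := fun t ht => by
    simp only [hIcdef]; rw [max_eq_left ht]
  -- the integrating factors
  set gg : ℝ → ℝ := fun t => (β - cIS) * Sc t - cII * Ic t - (m + γ + μ) with hgg
  set hh : ℝ → ℝ := fun t => r - m - cSS * Sc t - (cSI + β) * Ic t with hhh
  have hggc : Continuous gg :=
    ((continuous_const.mul hScc).sub (continuous_const.mul hIcc)).sub continuous_const
  have hhhc : Continuous hh :=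
    ((continuous_const.sub (continuous_const.mul hScc))).sub (continuous_const.mul hIcc)
  set G : ℝ → ℝ := fun t => ∫ s in (0:ℝ)..t, gg s with hGdef
  set H : ℝ → ℝ := fun t => ∫ s in (0:ℝ)..t, hh s with hHdef
  have hG : ∀ t, HasDerivAt G (gg t) t := fun t =>
    (hggc.integral_hasStrictDerivAt 0 t).hasDerivAt
  have hH : ∀ t, HasDerivAt H (hh t) t := fun t =>
    (hhhc.integral_hasStrictDerivAt 0 t).hasDerivAt
  have hG0 : G 0 = 0 := intervalIntegral.integral_same
  have hH0 : H 0 = 0 := intervalIntegral.integral_same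
  have hGc : Continuous G := continuous_iff_continuousAt.2 fun t => (hG t).continuousAt
  have hHc : Continuous H := continuous_iff_continuousAt.2 fun t => (hH t).continuousAt
  -- Step A : formula for I
  have hIDgg : ∀ t, 0 ≤ t → ID t = I t * gg t := fun t ht => by
    simp only [hID, hgg, hSceq t ht, hIceq t ht]; ring
  have hJd : ∀ t, 0 < t → HasDerivAt (fun t => I t * Real.exp (-G t)) ((fun _ => (0:ℝ)) t) t := by
    intro t ht
    have h1 := (hI t ht.le).mul (((hG t).neg).exp)
    exact h1.congr_deriv (by beta_reduce; rw [hIDgg t ht.le]; simp only [Pi.neg_apply]; ring)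
  have hJc : ContinuousOn (fun t => I t * Real.exp (-G t)) (Ici 0) :=
    hIcont.mul ((Real.continuous_exp.comp hGc.neg).continuousOn)
  have hJconst : ∀ t, 0 ≤ t → I t * Real.exp (-G t) = I 0 := by
    intro t ht
    have := constIci hJc hJd (fun _ _ => rfl) t ht
    simpa [hG0] using this
  have hIform : ∀ t, 0 ≤ t → I t = I 0 * Real.exp (G t) := by
    intro t ht
    have h := hJconst t ht
    have := congrArg (fun x => x * Real.exp (G t)) h
    simp only [mul_assoc, ← Real.exp_add] at this
    simpa using this
  have hInn : ∀ t, 0 ≤ t → 0 ≤ I t := by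
    intro t ht; rw [hIform t ht]; positivity
  have hIposall : 0 < I 0 → ∀ t, 0 ≤ t → 0 < I t := by
    intro h0 t ht; rw [hIform t ht]; positivity
  have hIzeroall : I 0 = 0 → ∀ t, 0 ≤ t → I t = 0 := by
    intro h0 t ht; rw [hIform t ht, h0, zero_mul]
  -- Step B : sign of S
  have hSDhh : ∀ t, 0 ≤ t → SD t = S t * hh t + (a * r + γ) * I t := fun t ht => by
    simp only [hSD, hhh, hSceq t ht, hIceq t ht]; ring
  have hud : ∀ t, 0 < t → HasDerivAt (fun t => S t * Real.exp (-H t))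
      ((fun t => (a * r + γ) * I t * Real.exp (-H t)) t) t := by
    intro t ht
    have h1 := (hS t ht.le).mul (((hH t).neg).exp)
    exact h1.congr_deriv (by beta_reduce; rw [hSDhh t ht.le]; simp only [Pi.neg_apply]; ring)
  have huc : ContinuousOn (fun t => S t * Real.exp (-H t)) (Ici 0) :=
    hScont.mul ((Real.continuous_exp.comp hHc.neg).continuousOn)
  have hSeqU : ∀ t, S t * Real.exp (-H t) * Real.exp (H t) = S t := by
    intro t
    rw [mul_assoc, ← Real.exp_add]
    simp
  have hSnn : ∀ t, 0 ≤ t → 0 ≤ S t := by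
    intro t ht
    have hmono := monoIci huc hud (fun t ht => by
      have := mul_nonneg (mul_nonneg (by positivity : (0:ℝ) ≤ a * r + γ) (hInn t ht.le))
        (Real.exp_pos (-H t)).le
      simpa using this)
    have h1 : S 0 * Real.exp (-H 0) ≤ S t * Real.exp (-H t) := hmono self_mem_Ici ht ht
    rw [hH0] at h1
    simp only [neg_zero, Real.exp_zero, mul_one] at h1
    have h2 : 0 ≤ S t * Real.exp (-H t) := le_trans hS0 h1
    calc (0:ℝ) ≤ S t * Real.exp (-H t) * Real.exp (H t) :=
          mul_nonneg h2 (Real.exp_pos _).le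
      _ = S t := hSeqU t
  have hSpos : ∀ t, 0 < t → 0 < S t := by
    intro t ht
    rcases eq_or_lt_of_le hI0 with h0 | h0
    · -- I ≡ 0, S 0 > 0
      have hS0pos : 0 < S 0 := by
        rcases eq_or_lt_of_le hS0 with h1 | h1
        · exfalso; exact hne (by rw [← h1, ← h0])
        · exact h1
      have hconst := constIci huc hud (fun s hs => by
        simp only [hIzeroall h0.symm s hs.le, mul_zero, zero_mul]) t ht.le
      have : S t * Real.exp (-H t) = S 0 := by
        simpa [hH0] using hconst
      calc (0:ℝ) < S 0 * Real.exp (H t) := by positivity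
        _ = S t * Real.exp (-H t) * Real.exp (H t) := by rw [this]
        _ = S t := hSeqU t
    · -- I 0 > 0 : u strictly increasing
      have hmono := strictMonoIci huc hud (fun s hs => by
        have := mul_pos (mul_pos (by positivity : (0:ℝ) < a * r + γ) (hIposall h0 s hs.le))
          (Real.exp_pos (-H s))
        simpa using this)
      have h1 : S 0 * Real.exp (-H 0) < S t * Real.exp (-H t) := hmono self_mem_Ici ht.le ht
      rw [hH0] at h1
      simp only [neg_zero, Real.exp_zero, mul_one] at h1
      have h2 : 0 < S t * Real.exp (-H t) := lt_of_le_of_lt hS0 h1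
      calc (0:ℝ) < S t * Real.exp (-H t) * Real.exp (H t) :=
            mul_pos h2 (Real.exp_pos _)
        _ = S t := hSeqU t
  -- Step C : decay of I
  have hggle : ∀ s, 0 ≤ s → gg s ≤ -(m + γ + μ) := by
    intro s hs
    have h1 : (β - cIS) * S s ≤ 0 :=
      mul_nonpos_of_nonpos_of_nonneg (by linarith) (hSnn s hs)
    have h2 : 0 ≤ cII * I s := mul_nonneg hcII.le (hInn s hs)
    simp only [hgg, hSceq s hs, hIceq s hs]
    linarith
  have hGle : ∀ t, 0 ≤ t → G t ≤ -((m + γ + μ) * t) := by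
    intro t ht0
    have h1 : (∫ s in (0:ℝ)..t, gg s) ≤ ∫ s in (0:ℝ)..t, -(m + γ + μ) := by
      apply intervalIntegral.integral_mono_on ht0 (hggc.intervalIntegrable 0 t)
        (intervalIntegrable_const)
      intro x hx; exact hggle x hx.1
    have h2 : (∫ s in (0:ℝ)..t, (-(m + γ + μ) : ℝ)) = -((m + γ + μ) * t) := by
      rw [intervalIntegral.integral_const]; simp [smul_eq_mul]; ring
    calc G t = ∫ s in (0:ℝ)..t, gg s := rfl
      _ ≤ _ := h1
      _ = _ := h2
  have hIdec : ∀ t, 0 ≤ t → I t ≤ I 0 * Real.exp (-((m + γ + μ) * t)) := by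
    intro t ht
    rw [hIform t ht]
    exact mul_le_mul_of_nonneg_left (Real.exp_le_exp.2 (hGle t ht)) hI0
  have hexp_tend : Tendsto (fun t : ℝ => I 0 * Real.exp (-((m + γ + μ) * t))) atTop (𝓝 0) := by
    have h1 : Tendsto (fun t : ℝ => (m + γ + μ) * t) atTop atTop :=
      Tendsto.const_mul_atTop (by linarith) tendsto_id
    have h2 := Real.tendsto_exp_neg_atTop_nhds_zero.comp h1
    have := h2.const_mul (I 0)
    simpa using this
  have hItend : Tendsto I atTop (𝓝 0) := by
    apply tendsto_of_tendsto_of_tendsto_of_le_of_le' tendsto_const_nhds hexp_tend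
    · filter_upwards [eventually_ge_atTop (0:ℝ)] with t ht using hInn t ht
    · filter_upwards [eventually_ge_atTop (0:ℝ)] with t ht using hIdec t ht
  -- Step D : upper bound on S
  set c := a * r + γ with hc
  have hcpos : 0 < c := by positivity
  set B := max (S 0) ((r - m + c * I 0) / cSS + 1) with hB
  have hBq : (r - m + c * I 0) / cSS + 1 ≤ B := le_max_right _ _
  have hfrac : 0 < (r - m + c * I 0) / cSS := by
    have h1 : 0 < r - m := by linarith
    have h2 : 0 ≤ c * I 0 := mul_nonneg hcpos.le hI0
    positivity
  have hB1 : 1 < B := lt_of_lt_of_le (by linarith) hBq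
  have hIub : ∀ t, 0 ≤ t → I t ≤ I 0 := by
    intro t ht
    have h1 := hIdec t ht
    have h2 : Real.exp (-((m + γ + μ) * t)) ≤ 1 := by
      rw [← Real.exp_zero]
      apply Real.exp_le_exp.2
      nlinarith
    nlinarith [mul_le_mul_of_nonneg_left h2 hI0]
  have hSB : ∀ t, 0 ≤ t → S t ≤ B := by
    apply stay_le hScont (fun t ht => hS t ht.le) ?_ (le_max_left _ _)
    intro t ht hBt
    rw [← hB] at hBt
    have hSt1 : 1 ≤ S t := (lt_of_lt_of_le hB1 hBt.le).le
    have hcSSB : r - m + c * I 0 + cSS ≤ cSS * S t := by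
      have h3 : cSS * ((r - m + c * I 0) / cSS + 1) ≤ cSS * S t :=
        mul_le_mul_of_nonneg_left (le_trans hBq hBt.le) hcSS.le
      rw [mul_add, mul_div_cancel₀ _ (ne_of_gt hcSS)] at h3
      linarith
    have h2 : r - m - cSS * S t ≤ -(c * I 0) - cSS := by linarith
    have hkey : S t * (r - m - cSS * S t) ≤ -(c * I 0) - cSS := by
      have h4 : S t * (r - m - cSS * S t) ≤ S t * (-(c * I 0) - cSS) :=
        mul_le_mul_of_nonneg_left h2 (by linarith)
      nlinarith [mul_nonneg (sub_nonneg.2 hSt1) (show (0:ℝ) ≤ c * I 0 + cSS by positivity)]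
    have hnn1 : 0 ≤ cSI * I t * S t := by
      have := hInn t ht.le; have := hSnn t ht.le; positivity
    have hnn2 : 0 ≤ β * S t * I t := by
      have := hInn t ht.le; have := hSnn t ht.le; positivity
    have hcI : c * I t ≤ c * I 0 := mul_le_mul_of_nonneg_left (hIub t ht.le) hcpos.le
    have hexpand : SD t = S t * (r - m - cSS * S t) - cSI * I t * S t - β * S t * I t + c * I t := by
      simp only [hSD, hc]; ring
    rw [hexpand]
    nlinarith
  -- Step E : eventual lower bound on S
  set ρ := (r - m) / 2 with hρ
  have hρpos : 0 < ρ := by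
    have : 0 < r - m := by linarith
    positivity
  set δ := ρ / (2 * cSS) with hδ
  set ε := ρ / (2 * (cSI + β)) with hε
  have hδpos : 0 < δ := by positivity
  have hεpos : 0 < ε := by positivity
  obtain ⟨T0, hT0⟩ : ∃ T0, ∀ t, T0 ≤ t → I t < ε := by
    have := hItend.eventually (gt_mem_nhds hεpos)
    rw [eventually_atTop] at this
    obtain ⟨T0, hT0⟩ := this
    exact ⟨T0, fun t htT => hT0 t htT⟩
  set T := max T0 1 with hT
  have hT1 : (1:ℝ) ≤ T := le_max_right _ _
  have hTpos : (0:ℝ) < T := lt_of_lt_of_le one_pos hT1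
  have hIε : ∀ t, T ≤ t → I t < ε := fun t htT => hT0 t (le_trans (le_max_left _ _) htT)
  have hSTpos : 0 < S T := hSpos T hTpos
  have hkeyD : ∀ t, T ≤ t → S t ≤ δ → ρ * S t ≤ SD t := by
    intro t htT hSδ
    have ht0 : (0:ℝ) ≤ t := le_trans hTpos.le htT
    have h1 : cSS * S t ≤ ρ / 2 := by
      have h3 : cSS * S t ≤ cSS * δ := mul_le_mul_of_nonneg_left hSδ hcSS.le
      have h4 : cSS * δ = ρ / 2 := by rw [hδ]; field_simp
      linarith
    have h2 : (cSI + β) * I t ≤ ρ / 2 := by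
      have h3 : (cSI + β) * I t ≤ (cSI + β) * ε :=
        mul_le_mul_of_nonneg_left (hIε t htT).le (by positivity)
      have h4 : (cSI + β) * ε = ρ / 2 := by rw [hε]; field_simp
      linarith
    have hSnn' := hSnn t ht0
    have hInn' := hInn t ht0
    have hexp2 : SD t = S t * (r - m - cSS * S t - (cSI + β) * I t) + c * I t := by
      simp only [hSD, hc]; ring
    have hrm2 : r - m = 2 * ρ := by rw [hρ]; ring
    rw [hexp2]
    nlinarith [mul_nonneg hSnn'
      (show (0:ℝ) ≤ (r - m - cSS * S t - (cSI + β) * I t) - ρ by linarith),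
      mul_nonneg hcpos.le hInn']
  have hclaim1 : ∃ t2, T ≤ t2 ∧ δ ≤ S t2 := by
    by_contra hcon
    push_neg at hcon
    have hwd : ∀ t, T < t → HasDerivAt (fun t => S t * Real.exp (-(ρ * t)))
        ((fun t => (SD t - ρ * S t) * Real.exp (-(ρ * t))) t) t := by
      intro t htT
      have hlin : HasDerivAt (fun y : ℝ => -(ρ * y)) (-ρ) t := by
        have := ((hasDerivAt_id t).const_mul ρ).neg; simp only [id_eq, mul_one] at this; exact this
      have h1 := (hS t (le_trans hTpos.le htT.le)).mul hlin.exp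
      exact h1.congr_deriv (by beta_reduce; ring)
    have hwc : ContinuousOn (fun t => S t * Real.exp (-(ρ * t))) (Ici T) :=
      (hScont.mono (Ici_subset_Ici.2 hTpos.le)).mul
        ((Real.continuous_exp.comp ((continuous_const.mul continuous_id).neg)).continuousOn)
    have hwmono := monoIci hwc hwd (fun t htT => by
      have hkey := hkeyD t htT.le (hcon t htT.le).le
      exact mul_nonneg (by linarith) (Real.exp_pos _).le)
    set wT := S T * Real.exp (-(ρ * T)) with hwT
    have hwTpos : 0 < wT := by positivity
    have htendw : Tendsto (fun t : ℝ => δ * Real.exp (-(ρ * t))) atTop (𝓝 0) := by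
      have h1 : Tendsto (fun t : ℝ => ρ * t) atTop atTop :=
        Tendsto.const_mul_atTop hρpos tendsto_id
      have h2 := Real.tendsto_exp_neg_atTop_nhds_zero.comp h1
      have := h2.const_mul δ
      simpa using this
    obtain ⟨T1, hT1'⟩ : ∃ T1, ∀ t, T1 ≤ t → δ * Real.exp (-(ρ * t)) < wT := by
      have := htendw.eventually (gt_mem_nhds hwTpos)
      rw [eventually_atTop] at this
      obtain ⟨T1, hT1'⟩ := this
      exact ⟨T1, fun t h => hT1' t h⟩
    set t3 := max T T1 with ht3
    have h1 : wT ≤ S t3 * Real.exp (-(ρ * t3)) :=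
      hwmono self_mem_Ici (Set.mem_Ici.2 (le_max_left _ _)) (le_max_left _ _)
    have h2 : S t3 * Real.exp (-(ρ * t3)) < δ * Real.exp (-(ρ * t3)) :=
      mul_lt_mul_of_pos_right (hcon t3 (le_max_left _ _)) (Real.exp_pos _)
    have h3 : δ * Real.exp (-(ρ * t3)) < wT := hT1' t3 (le_max_right _ _)
    linarith
  obtain ⟨t2, ht2T, ht2δ⟩ := hclaim1
  have ht2pos : (0:ℝ) < t2 := lt_of_lt_of_le hTpos ht2T
  have hSδ : ∀ t, t2 ≤ t → δ ≤ S t := by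
    apply stay_ge (hScont.mono (Ici_subset_Ici.2 ht2pos.le))
      (fun t htt => hS t (lt_of_lt_of_le ht2pos htt.le).le) ?_ ht2δ
    intro t htt hlt
    have htT : T ≤ t := le_trans ht2T htt.le
    have hk := hkeyD t htT hlt.le
    have hSpos' := hSpos t (lt_of_lt_of_le hTpos htT)
    nlinarith
  -- Step F : convergence of S to S1
  set S1 := (r - m) / cSS with hS1
  have hS1pos : 0 < S1 := by
    have : 0 < r - m := by linarith
    positivity
  set lam := m + γ + μ with hlam
  have hlampos : 0 < lam := by positivity
  set α := min (2 * cSS * δ) (lam / 2) with hα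
  have hαpos : 0 < α := lt_min (by positivity) (by positivity)
  have hαlam : 0 < lam - α := by
    have := min_le_right (2 * cSS * δ) (lam / 2)
    have : α ≤ lam / 2 := this
    linarith
  have hα2 : α ≤ 2 * cSS * δ := min_le_left _ _
  have hBpos : 0 < B := lt_trans one_pos hB1
  set M := (B + S1) * ((cSI + β) * B + c) with hM
  have hMpos : 0 < M := by positivity
  set C := 2 * M * I 0 with hC
  have hCnn : 0 ≤ C := by positivity
  set W : ℝ → ℝ := fun t => (S t - S1) ^ 2 * Real.exp (α * t)
    + (C / (lam - α)) * Real.exp ((α - lam) * t) with hW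
  have hWd : ∀ t, t2 < t → HasDerivAt W
      ((fun t => (2 * (S t - S1) * SD t + α * (S t - S1) ^ 2) * Real.exp (α * t)
        - C * Real.exp ((α - lam) * t)) t) t := by
    intro t htt
    have ht0 : (0:ℝ) ≤ t := (lt_trans ht2pos htt).le
    have h1 : HasDerivAt (fun t => (S t - S1) ^ 2) (2 * (S t - S1) * SD t) t := by
      have h := ((hS t ht0).sub_const S1).pow 2
      exact h.congr_deriv (by push_cast; ring)
    have h2 : HasDerivAt (fun t => Real.exp (α * t)) (α * Real.exp (α * t)) t := by
      have hlin : HasDerivAt (fun y : ℝ => α * y) α t := by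
        simpa using (hasDerivAt_id t).const_mul α
      have := hlin.exp
      convert this using 1
      ring
    have h3 : HasDerivAt (fun t => Real.exp ((α - lam) * t))
        ((α - lam) * Real.exp ((α - lam) * t)) t := by
      have hlin : HasDerivAt (fun y : ℝ => (α - lam) * y) (α - lam) t := by
        simpa using (hasDerivAt_id t).const_mul (α - lam)
      have := hlin.exp
      convert this using 1
      ring
    have h4 := (h1.mul h2).add (h3.const_mul (C / (lam - α)))
    have hne' : lam - α ≠ 0 := ne_of_gt hαlam
    have key : C / (lam - α) * (α - lam) = -C := by
      rw [div_mul_eq_mul_div, div_eq_iff hne']; ring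
    exact h4.congr_deriv (by dsimp only; linear_combination (Real.exp ((α - lam) * t)) * key)
  have hW'le : ∀ t, t2 < t →
      (2 * (S t - S1) * SD t + α * (S t - S1) ^ 2) * Real.exp (α * t)
        - C * Real.exp ((α - lam) * t) ≤ 0 := by
    intro t htt
    have ht0 : (0:ℝ) ≤ t := (lt_trans ht2pos htt).le
    have hδS : δ ≤ S t := hSδ t htt.le
    have hSB' : S t ≤ B := hSB t ht0
    have hSnn' : 0 ≤ S t := hSnn t ht0
    have hI1 : 0 ≤ I t := hInn t ht0
    have hI2 : I t ≤ I 0 * Real.exp (-(lam * t)) := by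
      have := hIdec t ht0
      simpa [hlam] using this
    have hq : SD t = -(cSS * S t) * (S t - S1) + I t * (c - (cSI + β) * S t) := by
      simp only [hSD, hc, hS1]
      field_simp
      ring
    have habs1 : |S t - S1| ≤ B + S1 := abs_le.2 ⟨by linarith, by linarith⟩
    have habs2 : |c - (cSI + β) * S t| ≤ (cSI + β) * B + c := by
      have hnn : 0 ≤ (cSI + β) * S t := by positivity
      have hub : (cSI + β) * S t ≤ (cSI + β) * B :=
        mul_le_mul_of_nonneg_left hSB' (by positivity)
      exact abs_le.2 ⟨by linarith, by linarith⟩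
    have hcross : (S t - S1) * (c - (cSI + β) * S t) ≤ M := by
      calc (S t - S1) * (c - (cSI + β) * S t)
          ≤ |(S t - S1) * (c - (cSI + β) * S t)| := le_abs_self _
        _ = |S t - S1| * |c - (cSI + β) * S t| := abs_mul _ _
        _ ≤ (B + S1) * ((cSI + β) * B + c) :=
            mul_le_mul habs1 habs2 (abs_nonneg _) (by linarith [abs_nonneg (S t - S1)])
        _ = M := hM.symm
    have hcross2 : 2 * ((S t - S1) * (I t * (c - (cSI + β) * S t)))
        ≤ C * Real.exp (-(lam * t)) := by
      have h5 : (S t - S1) * (I t * (c - (cSI + β) * S t))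
          = I t * ((S t - S1) * (c - (cSI + β) * S t)) := by ring
      have h6 : I t * ((S t - S1) * (c - (cSI + β) * S t)) ≤ I t * M :=
        mul_le_mul_of_nonneg_left hcross hI1
      have h7 : I t * M ≤ (I 0 * Real.exp (-(lam * t))) * M :=
        mul_le_mul_of_nonneg_right hI2 hMpos.le
      rw [h5]
      calc 2 * (I t * ((S t - S1) * (c - (cSI + β) * S t)))
          ≤ 2 * (I t * M) := by linarith
        _ ≤ 2 * ((I 0 * Real.exp (-(lam * t))) * M) := by linarith
        _ = C * Real.exp (-(lam * t)) := by rw [hC]; ring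
    have hmain : 2 * (S t - S1) * (-(cSS * S t) * (S t - S1)) + α * (S t - S1) ^ 2 ≤ 0 := by
      have hVnn : (0:ℝ) ≤ (S t - S1) ^ 2 := sq_nonneg _
      have h8 : 2 * cSS * δ ≤ 2 * cSS * S t :=
        mul_le_mul_of_nonneg_left hδS (by positivity)
      have h9 : α ≤ 2 * cSS * S t := le_trans hα2 h8
      have h10 : (α - 2 * cSS * S t) * (S t - S1) ^ 2 ≤ 0 :=
        mul_nonpos_of_nonpos_of_nonneg (by linarith) hVnn
      calc 2 * (S t - S1) * (-(cSS * S t) * (S t - S1)) + α * (S t - S1) ^ 2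
          = (α - 2 * cSS * S t) * (S t - S1) ^ 2 := by ring
        _ ≤ 0 := h10
    have h7 : 2 * (S t - S1) * SD t + α * (S t - S1) ^ 2 ≤ C * Real.exp (-(lam * t)) := by
      rw [hq]
      have hexpand : 2 * (S t - S1) * (-(cSS * S t) * (S t - S1) + I t * (c - (cSI + β) * S t))
          + α * (S t - S1) ^ 2
          = (2 * (S t - S1) * (-(cSS * S t) * (S t - S1)) + α * (S t - S1) ^ 2)
            + 2 * ((S t - S1) * (I t * (c - (cSI + β) * S t))) := by ring
      rw [hexpand]
      linarith
    have h8 : (2 * (S t - S1) * SD t + α * (S t - S1) ^ 2) * Real.exp (α * t)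
        ≤ (C * Real.exp (-(lam * t))) * Real.exp (α * t) :=
      mul_le_mul_of_nonneg_right h7 (Real.exp_pos _).le
    have h9 : (C * Real.exp (-(lam * t))) * Real.exp (α * t) = C * Real.exp ((α - lam) * t) := by
      rw [mul_assoc, ← Real.exp_add]
      congr 2
      ring
    linarith
  have hWc : ContinuousOn W (Ici t2) := by
    apply ContinuousOn.add
    · exact (((hScont.mono (Ici_subset_Ici.2 ht2pos.le)).sub continuousOn_const).pow 2).mul
        ((Real.continuous_exp.comp (continuous_const.mul continuous_id)).continuousOn)
    · exact continuousOn_const.mul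
        ((Real.continuous_exp.comp (continuous_const.mul continuous_id)).continuousOn)
  have hWanti : AntitoneOn W (Ici t2) := antiIci hWc hWd (fun t htt => hW'le t htt)
  have hVle : ∀ t, t2 ≤ t → (S t - S1) ^ 2 ≤ W t2 * Real.exp (-(α * t)) := by
    intro t htt
    have h1 : W t ≤ W t2 := hWanti self_mem_Ici htt htt
    have h2 : (S t - S1) ^ 2 * Real.exp (α * t) ≤ W t := by
      simp only [hW]
      have : 0 ≤ (C / (lam - α)) * Real.exp ((α - lam) * t) := by positivity
      linarith
    have h3 := le_trans h2 h1
    have h4 : (S t - S1) ^ 2 = (S t - S1) ^ 2 * Real.exp (α * t) * Real.exp (-(α * t)) := by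
      rw [mul_assoc, ← Real.exp_add]
      simp
    rw [h4]
    exact mul_le_mul_of_nonneg_right h3 (Real.exp_pos _).le
  have hbound_tend : Tendsto (fun t : ℝ => W t2 * Real.exp (-(α * t))) atTop (𝓝 0) := by
    have h1 : Tendsto (fun t : ℝ => α * t) atTop atTop :=
      Tendsto.const_mul_atTop hαpos tendsto_id
    have h2 := Real.tendsto_exp_neg_atTop_nhds_zero.comp h1
    have := h2.const_mul (W t2)
    simpa using this
  have hVtend : Tendsto (fun t => (S t - S1) ^ 2) atTop (𝓝 0) := by
    apply tendsto_of_tendsto_of_tendsto_of_le_of_le' tendsto_const_nhds hbound_tend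
    · filter_upwards with t using sq_nonneg _
    · filter_upwards [eventually_ge_atTop t2] with t htt using hVle t htt
  have habs : Tendsto (fun t => |S t - S1|) atTop (𝓝 0) := by
    have hsq := (Real.continuous_sqrt.tendsto' 0 0 Real.sqrt_zero).comp hVtend
    have : (fun t => Real.sqrt ((S t - S1) ^ 2)) = fun t => |S t - S1| := by
      funext t; exact Real.sqrt_sq_eq_abs _
    rw [← this]
    exact hsq
  have hStend : Tendsto S atTop (𝓝 S1) := by
    have h1 : Tendsto (fun t => S t - S1) atTop (𝓝 0) := by
      apply (tendsto_zero_iff_abs_tendsto_zero _).2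
      simpa [Function.comp_def] using habs
    have := h1.add_const S1
    simpa using this
  exact hStend.prodMk_nhds hItend


end Prop3Aux

/-- Proposition 3, part 3: if `β ≤ cIS` the disease-free equilibrium attracts
every nonnegative nonzero solution, and there is no interior equilibrium. -/
theorem prop3_part3_global_disease_free
    (r m β γ μ cSS cSI cIS cII a : ℝ)
    (hp : ParamsPos r m β γ μ cSS cSI cIS cII a)
    (hrm : m < r) (hβc : β ≤ cIS) :
    (∀ S I : ℝ → ℝ, IsSol r m β γ μ cSS cSI cIS cII a S I →
      0 ≤ S 0 → 0 ≤ I 0 → (S 0, I 0) ≠ ((0 : ℝ), (0 : ℝ)) →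
      Tendsto (fun t => (S t, I t)) atTop (𝓝 (((r - m) / cSS, 0) : ℝ × ℝ))) ∧
    (∀ s i : ℝ, 0 < s → 0 < i →
      ¬ IsEquilibrium r m β γ μ cSS cSI cIS cII a s i) := by
  constructor
  · intro S I hsol hS0 hI0 hne
    exact Prop3Aux.main_conv r m β γ μ cSS cSI cIS cII a hp hrm hβc S I hsol hS0 hI0 hne
  · rintro s i hs hi ⟨h1, h2⟩
    obtain ⟨hr, hm, hβ, hγ, hμ, hcSS, hcSI, hcIS, hcII, ha0, ha1⟩ := hp
    have hβs : β * s * i ≤ cIS * s * i := by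
      apply mul_le_mul_of_nonneg_right _ hi.le
      exact mul_le_mul_of_nonneg_right hβc hs.le
    nlinarith [mul_pos hm hi, mul_pos hγ hi, mul_pos hμ hi,
      mul_pos (mul_pos hcII hi) hi]
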